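/- Let d ≥ 1, N ≥ 1, q ∈ (1, 2), q' = q/(q−1), r = q'/2, and R > 0. Let K : ℝ^d → M_N(ℂ) be measurable, K ∈ L^r(ℝ^d, M_N(ℂ)), with K(x) = 0 for |x| > R. For z ∈ ℤ^d let C_z := z + [0, 1]^d. Then there exists a constant C > 0, depending only on ‖K‖_r, R, q, d and N, such that for all w ∈ L^q(ℝ^d, ℂ^N): |∬_{ℝ^d×ℝ^d} ⟨w(x), K(x−y) w(y)⟩_{ℂ^N} dx dy| ≤ C ( sup_{z ∈ ℤ^d} ‖w‖_{L^q(C_z)} )^{2−q} ‖w‖_q^q. -/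

import Mathlib

open MeasureTheory Matrix
open scoped ENNReal

/-- The squared Euclidean norm `|v|²_{ℂ^N}` of a vector `v ∈ ℂ^N`. -/
noncomputable def vecNormSq {N : ℕ} (v : Fin N → ℂ) : ℝ := ∑ i, ‖v i‖ ^ 2

/-- The (Frobenius) norm `|M|` of a matrix `M ∈ M_N(ℂ)`. -/
noncomputable def matNorm {N : ℕ} (M : Matrix (Fin N) (Fin N) ℂ) : ℝ :=
  (∑ i, ∑ j, ‖M i j‖ ^ 2) ^ ((1 : ℝ) / 2)

lemma vecNormSq_nonneg {N : ℕ} (v : Fin N → ℂ) : 0 ≤ vecNormSq v :=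
  Finset.sum_nonneg fun _ _ => by positivity

lemma matNorm_nonneg {N : ℕ} (M : Matrix (Fin N) (Fin N) ℂ) : 0 ≤ matNorm M :=
  Real.rpow_nonneg (Finset.sum_nonneg fun _ _ => Finset.sum_nonneg fun _ _ => by positivity) _

lemma matNorm_zero {N : ℕ} : matNorm (0 : Matrix (Fin N) (Fin N) ℂ) = 0 := by
  simp [matNorm]

lemma matNorm_eq_sqrt {N : ℕ} (M : Matrix (Fin N) (Fin N) ℂ) :
    matNorm M = Real.sqrt (∑ i, ∑ j, ‖M i j‖ ^ 2) := by
  rw [matNorm, Real.sqrt_eq_rpow]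

/-- Cauchy–Schwarz bound for the sesquilinear form. -/
lemma cs_dotProduct {N : ℕ} (M : Matrix (Fin N) (Fin N) ℂ) (u v : Fin N → ℂ) :
    ‖dotProduct (star u) (M *ᵥ v)‖
      ≤ matNorm M * Real.sqrt (vecNormSq u) * Real.sqrt (vecNormSq v) := by
  have hMv : ∀ i, ‖(M *ᵥ v) i‖ ^ 2 ≤ (∑ j, ‖M i j‖ ^ 2) * vecNormSq v := by
    intro i
    have h1 : ‖(M *ᵥ v) i‖ ≤ ∑ j, ‖M i j‖ * ‖v j‖ := by
      rw [Matrix.mulVec, dotProduct]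
      refine (norm_sum_le Finset.univ fun j => M i j * v j).trans_eq ?_
      exact Finset.sum_congr rfl fun j _ => norm_mul _ _
    have h2 : ∑ j, ‖M i j‖ * ‖v j‖
        ≤ Real.sqrt (∑ j, ‖M i j‖ ^ 2) * Real.sqrt (∑ j, ‖v j‖ ^ 2) :=
      Real.sum_mul_le_sqrt_mul_sqrt _ _ _
    have h3 : ‖(M *ᵥ v) i‖ ≤ Real.sqrt ((∑ j, ‖M i j‖ ^ 2) * vecNormSq v) := by
      rw [Real.sqrt_mul (Finset.sum_nonneg fun _ _ => by positivity)]
      exact h1.trans h2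
    calc ‖(M *ᵥ v) i‖ ^ 2 ≤ Real.sqrt ((∑ j, ‖M i j‖ ^ 2) * vecNormSq v) ^ 2 := by
          gcongr
      _ = (∑ j, ‖M i j‖ ^ 2) * vecNormSq v := Real.sq_sqrt
          (mul_nonneg (Finset.sum_nonneg fun _ _ => by positivity) (vecNormSq_nonneg v))
  have key : ‖dotProduct (star u) (M *ᵥ v)‖
      ≤ Real.sqrt (vecNormSq u) * Real.sqrt (∑ i, ‖(M *ᵥ v) i‖ ^ 2) := by
    refine le_trans ?_ (Real.sum_mul_le_sqrt_mul_sqrt Finset.univ (fun i => ‖u i‖)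
      (fun i => ‖(M *ᵥ v) i‖))
    rw [dotProduct]
    refine (norm_sum_le _ _).trans ?_
    refine le_of_eq (Finset.sum_congr rfl fun i _ => ?_)
    rw [Pi.star_apply, norm_mul, norm_star]
  refine key.trans ?_
  rw [mul_comm (matNorm M), mul_assoc, matNorm_eq_sqrt]
  gcongr
  rw [← Real.sqrt_mul (by positivity)]
  refine Real.sqrt_le_sqrt ?_
  calc ∑ i, ‖(M *ᵥ v) i‖ ^ 2 ≤ ∑ i, (∑ j, ‖M i j‖ ^ 2) * vecNormSq v :=
        Finset.sum_le_sum fun i _ => hMv i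
    _ = (∑ i, ∑ j, ‖M i j‖ ^ 2) * vecNormSq v := by rw [← Finset.sum_mul]

/-- ENNReal algebraic splitting for the three-fold Hölder. -/
lemma ennreal_split {q r : ℝ} (hq1 : 1 < q) (hq2 : q < 2) (hr : r = q / (q - 1) / 2)
    (a b g : ℝ≥0∞) :
    a * g * b = (a ^ q * g ^ r) ^ ((q - 1) / q) * (b ^ q * g ^ r) ^ ((q - 1) / q)
      * (a ^ q * b ^ q) ^ ((2 - q) / q) := by
  have hq0 : (0:ℝ) < q := by linarith
  have h2q : (0:ℝ) ≤ 2 - q := by linarith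
  have hα : (0:ℝ) ≤ (q - 1) / q := div_nonneg (by linarith) hq0.le
  have hq1' : q - 1 ≠ 0 := by intro h; rw [sub_eq_zero] at h; exact absurd h.symm hq1.ne
  have hqne : q ≠ 0 := hq0.ne'
  have hγ : (0:ℝ) ≤ (2 - q) / q := div_nonneg h2q hq0.le
  have hr0 : (0:ℝ) ≤ r := by
    rw [hr]
    have : (0:ℝ) < q - 1 := by linarith
    positivity
  rw [ENNReal.mul_rpow_of_nonneg _ _ hα, ENNReal.mul_rpow_of_nonneg _ _ hα,
    ENNReal.mul_rpow_of_nonneg _ _ hγ]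
  simp only [← ENNReal.rpow_mul]
  have e1 : q * ((q - 1) / q) + q * ((2 - q) / q) = 1 := by field_simp; ring
  have e2 : r * ((q - 1) / q) + r * ((q - 1) / q) = 1 := by
    rw [hr]
    field_simp
    ring
  have ha : a = a ^ (q * ((q - 1) / q)) * a ^ (q * ((2 - q) / q)) := by
    rw [← ENNReal.rpow_add_of_nonneg _ _ (mul_nonneg hq0.le hα) (mul_nonneg hq0.le hγ), e1,
      ENNReal.rpow_one]
  have hb : b = b ^ (q * ((q - 1) / q)) * b ^ (q * ((2 - q) / q)) := by
    rw [← ENNReal.rpow_add_of_nonneg _ _ (mul_nonneg hq0.le hα) (mul_nonneg hq0.le hγ), e1,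
      ENNReal.rpow_one]
  have hg : g = g ^ (r * ((q - 1) / q)) * g ^ (r * ((q - 1) / q)) := by
    rw [← ENNReal.rpow_add_of_nonneg _ _ (mul_nonneg hr0 hα) (mul_nonneg hr0 hα), e2,
      ENNReal.rpow_one]
  conv_lhs => rw [ha, hb, hg]
  ring

lemma ennreal_assemble {α γ : ℝ} (hα : 0 ≤ α) (hγ : 0 ≤ γ) (hsum : α + α + γ = 1)
    (X Kk B : ℝ≥0∞) :
    (X * Kk) ^ α * (X * Kk) ^ α * (X * B) ^ γ = X * (Kk ^ α * Kk ^ α) * B ^ γ := by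
  rw [ENNReal.mul_rpow_of_nonneg _ _ hα, ENNReal.mul_rpow_of_nonneg _ _ hγ]
  have hX : X ^ α * X ^ α * X ^ γ = X := by
    rw [← ENNReal.rpow_add_of_nonneg _ _ hα hα, ← ENNReal.rpow_add_of_nonneg _ _ (by linarith) hγ,
      hsum, ENNReal.rpow_one]
  calc X ^ α * Kk ^ α * (X ^ α * Kk ^ α) * (X ^ γ * B ^ γ)
      = (X ^ α * X ^ α * X ^ γ) * (Kk ^ α * Kk ^ α) * B ^ γ := by ring
    _ = X * (Kk ^ α * Kk ^ α) * B ^ γ := by rw [hX]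

set_option maxHeartbeats 1000000 in
/-- **No-vanishing estimate.** For a compactly supported kernel `K ∈ L^r`,
the bilinear energy of `w` is controlled by
`C (sup_{z ∈ ℤ^d} ‖w‖_{L^q(C_z)})^{2−q} ‖w‖_q^q`, where `C_z = z + [0,1]^d`. -/
theorem energy_no_vanishing_bound
    (d N : ℕ) (hd : 1 ≤ d) (hN : 1 ≤ N)
    (q r R : ℝ) (hq1 : 1 < q) (hq2 : q < 2) (hr : r = (q / (q - 1)) / 2)
    (hR : 0 < R)
    (K : EuclideanSpace ℝ (Fin d) → Matrix (Fin N) (Fin N) ℂ)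
    (hKmeas : ∀ i j, Measurable fun x => K x i j)
    (hKr : MemLp (fun x => matNorm (K x)) (ENNReal.ofReal r) volume)
    (hKsupp : ∀ x : EuclideanSpace ℝ (Fin d), R < ‖x‖ → K x = 0) :
    ∃ C : ℝ, 0 < C ∧
      ∀ w : EuclideanSpace ℝ (Fin d) → Fin N → ℂ,
        MemLp w (ENNReal.ofReal q) volume →
        ‖∫ x, ∫ y, dotProduct (star (w x)) ((K (x - y)) *ᵥ (w y))‖
          ≤ C * (⨆ z : Fin d → ℤ,
                (∫ x in {x : EuclideanSpace ℝ (Fin d) |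
                    ∀ i, (z i : ℝ) ≤ x i ∧ x i ≤ z i + 1},
                  vecNormSq (w x) ^ (q / 2)) ^ (1 / q)) ^ (2 - q)
            * (∫ x, vecNormSq (w x) ^ (q / 2)) := by
  classical
  have hq0 : (0:ℝ) < q := by linarith
  have hq1' : (0:ℝ) < q - 1 := by linarith
  have h2q : (0:ℝ) ≤ 2 - q := by linarith
  have hrpos : (0:ℝ) < r := by rw [hr]; positivity
  set α : ℝ := (q - 1) / q with hαdef
  set γ : ℝ := (2 - q) / q with hγdef
  have hαpos : 0 < α := div_pos hq1' hq0
  have hγ0 : 0 ≤ γ := div_nonneg h2q hq0.le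
  have hsum3 : α + α + γ = 1 := by rw [hαdef, hγdef]; field_simp; ring
  -- the kernel weight
  set G : EuclideanSpace ℝ (Fin d) → ℝ≥0∞ := fun v => ENNReal.ofReal (matNorm (K v)) with hGdef
  have hmatmeas : Measurable fun v : EuclideanSpace ℝ (Fin d) => matNorm (K v) := by
    have : (fun v : EuclideanSpace ℝ (Fin d) => matNorm (K v))
        = fun v => Real.sqrt (∑ i, ∑ j, ‖K v i j‖ ^ 2) := funext fun v => matNorm_eq_sqrt _
    rw [this]
    exact Real.continuous_sqrt.measurable.comp
      (Finset.measurable_sum _ fun i _ => Finset.measurable_sum _ fun j _ =>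
        ((hKmeas i j).norm.pow_const 2))
  have hGmeas : Measurable G := hmatmeas.ennreal_ofReal
  set 𝒦 : ℝ≥0∞ := ∫⁻ v, G v ^ r with h𝒦def
  have h𝒦ne : 𝒦 ≠ ∞ := by
    have hne0 : ENNReal.ofReal r ≠ 0 := by
      simp only [ne_eq, ENNReal.ofReal_eq_zero, not_le]; exact hrpos
    have hfin := hKr.2
    rw [eLpNorm_eq_lintegral_rpow_enorm_toReal hne0 ENNReal.ofReal_ne_top] at hfin
    have htoReal : (ENNReal.ofReal r).toReal = r := ENNReal.toReal_ofReal hrpos.le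
    rw [htoReal] at hfin
    have heq : ∀ v, G v ^ r = ‖matNorm (K v)‖ₑ ^ r := by
      intro v
      rw [hGdef]
      congr 1
      rw [← ofReal_norm, Real.norm_of_nonneg (matNorm_nonneg _)]
    have : 𝒦 = (∫⁻ v, ‖matNorm (K v)‖ₑ ^ r) := by
      rw [h𝒦def]; exact lintegral_congr heq
    rw [this]
    intro htop
    rw [htop] at hfin
    rw [ENNReal.top_rpow_of_pos (by positivity)] at hfin
    exact (lt_irrefl _ hfin).elim
  -- covering number
  set Mc : ℕ := ((2 * ⌈R⌉ + 1).toNat) ^ d with hMcdef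
  set D : ℝ≥0∞ := 𝒦 ^ (2 * α) * (Mc : ℝ≥0∞) ^ γ with hDdef
  have hDne : D ≠ ∞ := by
    apply ENNReal.mul_ne_top
    · exact ENNReal.rpow_ne_top_of_nonneg (by positivity) h𝒦ne
    · exact ENNReal.rpow_ne_top_of_nonneg hγ0 (ENNReal.natCast_ne_top Mc)
  refine ⟨D.toReal + 1, by positivity, ?_⟩
  intro w hw
  -- cube sets
  set Cz : (Fin d → ℤ) → Set (EuclideanSpace ℝ (Fin d)) :=
    fun z => {x : EuclideanSpace ℝ (Fin d) | ∀ i, (z i : ℝ) ≤ x i ∧ x i ≤ z i + 1} with hCzdef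
  have hproj : ∀ i : Fin d, Measurable fun x : EuclideanSpace ℝ (Fin d) => x i := fun i =>
    (EuclideanSpace.proj (𝕜 := ℝ) i : EuclideanSpace ℝ (Fin d) →L[ℝ] ℝ).continuous.measurable
  have hCzmeas : ∀ z, MeasurableSet (Cz z) := by
    intro z
    have : Cz z = ⋂ i, ((fun x : EuclideanSpace ℝ (Fin d) => x i) ⁻¹' Set.Icc (z i : ℝ) (z i + 1)) := by
      ext x
      simp [hCzdef, Set.mem_Icc]
    rw [this]
    exact MeasurableSet.iInter fun i => (hproj i) measurableSet_Icc
  -- measurable representative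
  set w' : EuclideanSpace ℝ (Fin d) → Fin N → ℂ := hw.1.mk w with hw'def
  have hw'sm : StronglyMeasurable w' := hw.1.stronglyMeasurable_mk
  have hae : w =ᵐ[volume] w' := hw.1.ae_eq_mk
  set φ' : EuclideanSpace ℝ (Fin d) → ℝ := fun x => vecNormSq (w' x) with hφ'def
  have hφ'meas : Measurable φ' := by
    apply Finset.measurable_sum
    intro i _
    exact ((measurable_pi_apply i).comp hw'sm.measurable).norm.pow_const 2
  have hφ'0 : ∀ x, 0 ≤ φ' x := fun x => vecNormSq_nonneg _
  set F : EuclideanSpace ℝ (Fin d) → ℝ≥0∞ := fun x => ENNReal.ofReal (Real.sqrt (φ' x)) with hFdef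
  have hFmeas : Measurable F := (Real.continuous_sqrt.measurable.comp hφ'meas).ennreal_ofReal
  set ψ : EuclideanSpace ℝ (Fin d) → ℝ := fun x => φ' x ^ (q / 2) with hψdef
  have hψ0 : ∀ x, 0 ≤ ψ x := fun x => Real.rpow_nonneg (hφ'0 x) _
  have hψae : (fun x => vecNormSq (w x) ^ (q / 2)) =ᵐ[volume] ψ := by
    filter_upwards [hae] with x hx
    rw [hψdef]; simp only [hφ'def, hx]
  -- integrability
  have hwq' : MemLp w' (ENNReal.ofReal q) volume := hw.ae_eq hae
  have hsqrtb : ∀ x, Real.sqrt (φ' x) ≤ Real.sqrt N * ‖w' x‖ := by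
    intro x
    have h1 : φ' x ≤ N * ‖w' x‖ ^ 2 := by
      rw [hφ'def]
      calc vecNormSq (w' x) ≤ ∑ _i : Fin N, ‖w' x‖ ^ 2 := by
            apply Finset.sum_le_sum
            intro i _
            have := norm_le_pi_norm (w' x) i
            exact pow_le_pow_left₀ (norm_nonneg _) this 2
        _ = N * ‖w' x‖ ^ 2 := by simp [Finset.sum_const, nsmul_eq_mul]
    calc Real.sqrt (φ' x) ≤ Real.sqrt ((N : ℝ) * ‖w' x‖ ^ 2) := Real.sqrt_le_sqrt h1
      _ = Real.sqrt N * ‖w' x‖ := by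
          rw [Real.sqrt_mul (Nat.cast_nonneg N), Real.sqrt_sq (norm_nonneg _)]
  have hsqrtmem : MemLp (fun x => Real.sqrt (φ' x)) (ENNReal.ofReal q) volume := by
    apply MemLp.of_le_mul hwq'
      (Real.continuous_sqrt.measurable.comp hφ'meas).aestronglyMeasurable
    filter_upwards with x
    show ‖Real.sqrt (φ' x)‖ ≤ Real.sqrt N * ‖w' x‖
    rw [Real.norm_of_nonneg (Real.sqrt_nonneg _)]
    exact hsqrtb x
  have hψint : Integrable ψ := by
    have h0 : (ENNReal.ofReal q) ≠ 0 := by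
      simp only [ne_eq, ENNReal.ofReal_eq_zero, not_le]; exact hq0
    have := hsqrtmem.integrable_norm_rpow h0 ENNReal.ofReal_ne_top
    rw [ENNReal.toReal_ofReal hq0.le] at this
    apply this.congr
    filter_upwards with x
    show ‖Real.sqrt (φ' x)‖ ^ q = φ' x ^ (q / 2)
    rw [Real.norm_of_nonneg (Real.sqrt_nonneg _), Real.sqrt_eq_rpow,
      ← Real.rpow_mul (hφ'0 x)]
    congr 1
    ring
  have hψwint : Integrable (fun x => vecNormSq (w x) ^ (q / 2)) := hψint.congr hψae.symm
  -- basic real quantities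
  set t : (Fin d → ℤ) → ℝ :=
    fun z => (∫ x in Cz z, vecNormSq (w x) ^ (q / 2)) ^ (1 / q) with htdef
  set S : ℝ := ⨆ z, t z with hSdef
  set W : ℝ := ∫ x, vecNormSq (w x) ^ (q / 2) with hWdef
  have hW0 : 0 ≤ W := integral_nonneg fun x => Real.rpow_nonneg (vecNormSq_nonneg _) _
  have hXz : ∀ z, 0 ≤ ∫ x in Cz z, vecNormSq (w x) ^ (q / 2) := fun z =>
    integral_nonneg fun x => Real.rpow_nonneg (vecNormSq_nonneg _) _
  have hXzW : ∀ z, (∫ x in Cz z, vecNormSq (w x) ^ (q / 2)) ≤ W := by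
    intro z
    apply setIntegral_le_integral hψwint
    filter_upwards with x
    exact Real.rpow_nonneg (vecNormSq_nonneg _) _
  have hbdd : BddAbove (Set.range t) := by
    refine ⟨W ^ (1 / q), ?_⟩
    rintro _ ⟨z, rfl⟩
    exact Real.rpow_le_rpow (hXz z) (hXzW z) (by positivity)
  have ht0 : ∀ z, 0 ≤ t z := fun z => Real.rpow_nonneg (hXz z) _
  have htS : ∀ z, t z ≤ S := fun z => le_ciSup hbdd z
  have hS0 : 0 ≤ S := le_trans (ht0 (fun _ => 0)) (htS _)
  -- per-cube bound
  have hcube : ∀ z, ∫⁻ x in Cz z, F x ^ q ≤ ENNReal.ofReal (S ^ q) := by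
    intro z
    have h1 : ∀ x, F x ^ q = ENNReal.ofReal (ψ x) := by
      intro x
      show ENNReal.ofReal (Real.sqrt (φ' x)) ^ q = ENNReal.ofReal (ψ x)
      rw [ENNReal.ofReal_rpow_of_nonneg (Real.sqrt_nonneg _) hq0.le]
      congr 1
      rw [Real.sqrt_eq_rpow, ← Real.rpow_mul (hφ'0 x)]
      congr 1
      ring
    calc ∫⁻ x in Cz z, F x ^ q = ∫⁻ x in Cz z, ENNReal.ofReal (ψ x) := by
          exact lintegral_congr fun x => h1 x
      _ = ENNReal.ofReal (∫ x in Cz z, ψ x) := by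
          rw [← ofReal_integral_eq_lintegral_ofReal hψint.restrict
            (Filter.Eventually.of_forall hψ0)]
      _ ≤ ENNReal.ofReal (S ^ q) := by
          apply ENNReal.ofReal_le_ofReal
          have he : ∫ x in Cz z, ψ x = ∫ x in Cz z, vecNormSq (w x) ^ (q / 2) :=
            integral_congr_ae (ae_restrict_of_ae hψae.symm)
          rw [he]
          have h2 : (∫ x in Cz z, vecNormSq (w x) ^ (q / 2)) = t z ^ q := by
            rw [htdef, ← Real.rpow_mul (hXz z), one_div, inv_mul_cancel₀ hq0.ne',
              Real.rpow_one]
          rw [h2]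
          exact Real.rpow_le_rpow (ht0 z) (htS z) hq0.le
  -- covering bound
  have habs : ∀ (v : EuclideanSpace ℝ (Fin d)) (i : Fin d), |v i| ≤ ‖v‖ := by
    intro v i
    rw [EuclideanSpace.norm_eq, ← Real.sqrt_sq_eq_abs]
    apply Real.sqrt_le_sqrt
    have : |v i| ^ 2 ≤ ∑ j, ‖v j‖ ^ 2 := by
      have := Finset.single_le_sum (f := fun j => ‖v j‖ ^ 2)
        (fun j _ => by positivity) (Finset.mem_univ i)
      simpa [Real.norm_eq_abs, sq_abs] using this
    simpa [Real.norm_eq_abs, sq_abs] using this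
  have hball : ∀ x : EuclideanSpace ℝ (Fin d), ∫⁻ y in Metric.closedBall x R, F y ^ q
      ≤ (Mc : ℝ≥0∞) * ENNReal.ofReal (S ^ q) := by
    intro x
    set T : Finset (Fin d → ℤ) :=
      Fintype.piFinset fun i => Finset.Icc (⌊x i⌋ - ⌈R⌉) (⌊x i⌋ + ⌈R⌉) with hTdef
    have hcard : T.card = Mc := by
      rw [hTdef, Fintype.card_piFinset]
      have : ∀ i : Fin d, (Finset.Icc (⌊x i⌋ - ⌈R⌉) (⌊x i⌋ + ⌈R⌉)).card
          = (2 * ⌈R⌉ + 1).toNat := by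
        intro i
        rw [Int.card_Icc]
        congr 1
        ring
      simp only [this, Finset.prod_const, Finset.card_univ, Fintype.card_fin, hMcdef]
    have hmem : ∀ y ∈ Metric.closedBall x R,
        (fun i => ⌊y i⌋) ∈ T ∧ y ∈ Cz (fun i => ⌊y i⌋) := by
      intro y hy
      have hdist : ∀ i, |y i - x i| ≤ R := by
        intro i
        have h1 : dist y x ≤ R := Metric.mem_closedBall.mp hy
        have h2 : |(y - x) i| ≤ ‖y - x‖ := habs (y - x) i
        rw [dist_eq_norm] at h1
        have h3 : (y - x) i = y i - x i := rfl
        rw [h3] at h2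
        linarith
      constructor
      · rw [hTdef, Fintype.mem_piFinset]
        intro i
        rw [Finset.mem_Icc]
        have h1 := hdist i
        have h2 : x i - R ≤ y i := by
          have := abs_le.mp h1
          linarith [this.1]
        have h3 : y i ≤ x i + R := by
          have := abs_le.mp h1
          linarith [this.2]
        constructor
        · apply Int.le_floor.mpr
          push_cast
          calc ((⌊x i⌋ : ℝ) - ⌈R⌉) ≤ x i - R :=
                sub_le_sub (Int.floor_le _) (Int.le_ceil _)
            _ ≤ y i := h2
        · have : (⌊y i⌋ : ℝ) < (⌊x i⌋ : ℝ) + ⌈R⌉ + 1 := by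
            calc (⌊y i⌋ : ℝ) ≤ y i := Int.floor_le _
              _ ≤ x i + R := h3
              _ < (⌊x i⌋ + 1) + ⌈R⌉ := by
                  have := Int.lt_floor_add_one (x i)
                  have := Int.le_ceil R
                  push_cast
                  linarith [Int.lt_floor_add_one (x i), Int.le_ceil R]
              _ = (⌊x i⌋ : ℝ) + ⌈R⌉ + 1 := by ring
          have : ⌊y i⌋ < ⌊x i⌋ + ⌈R⌉ + 1 := by exact_mod_cast this
          omega
      · intro i
        exact ⟨Int.floor_le _, (Int.lt_floor_add_one _).le⟩
    have hind : ∀ y, (Metric.closedBall x R).indicator (fun y => F y ^ q) y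
        ≤ ∑ z ∈ T, (Cz z).indicator (fun y => F y ^ q) y := by
      intro y
      by_cases hy : y ∈ Metric.closedBall x R
      · rw [Set.indicator_of_mem hy]
        obtain ⟨hT, hC⟩ := hmem y hy
        calc F y ^ q = (Cz (fun i => ⌊y i⌋)).indicator (fun y => F y ^ q) y :=
              (Set.indicator_of_mem hC (fun y => F y ^ q)).symm
          _ ≤ ∑ z ∈ T, (Cz z).indicator (fun y => F y ^ q) y :=
              Finset.single_le_sum (f := fun z => (Cz z).indicator (fun y => F y ^ q) y)
                (fun z _ => zero_le) hT
      · rw [Set.indicator_of_notMem hy]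
        exact zero_le
    calc ∫⁻ y in Metric.closedBall x R, F y ^ q
        = ∫⁻ y, (Metric.closedBall x R).indicator (fun y => F y ^ q) y :=
          (lintegral_indicator measurableSet_closedBall _).symm
      _ ≤ ∫⁻ y, ∑ z ∈ T, (Cz z).indicator (fun y => F y ^ q) y := lintegral_mono hind
      _ = ∑ z ∈ T, ∫⁻ y, (Cz z).indicator (fun y => F y ^ q) y :=
          lintegral_finset_sum _ fun z _ => ((hFmeas.pow_const q).indicator (hCzmeas z))
      _ = ∑ z ∈ T, ∫⁻ y in Cz z, F y ^ q :=
          Finset.sum_congr rfl fun z _ => lintegral_indicator (hCzmeas z) _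
      _ ≤ ∑ _z ∈ T, ENNReal.ofReal (S ^ q) := Finset.sum_le_sum fun z _ => hcube z
      _ = (T.card : ℝ≥0∞) * ENNReal.ofReal (S ^ q) := by
          rw [Finset.sum_const, nsmul_eq_mul]
      _ = (Mc : ℝ≥0∞) * ENNReal.ofReal (S ^ q) := by rw [hcard]
  -- pointwise form of F ^ q
  have hFq : ∀ x, F x ^ q = ENNReal.ofReal (ψ x) := by
    intro x
    show ENNReal.ofReal (Real.sqrt (φ' x)) ^ q = ENNReal.ofReal (ψ x)
    rw [ENNReal.ofReal_rpow_of_nonneg (Real.sqrt_nonneg _) hq0.le]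
    congr 1
    rw [Real.sqrt_eq_rpow, ← Real.rpow_mul (hφ'0 x)]
    congr 1
    ring
  have hWlint : (∫⁻ x, F x ^ q) = ENNReal.ofReal W := by
    calc ∫⁻ x, F x ^ q = ∫⁻ x, ENNReal.ofReal (ψ x) := lintegral_congr hFq
      _ = ENNReal.ofReal (∫ x, ψ x) :=
          (ofReal_integral_eq_lintegral_ofReal hψint (Filter.Eventually.of_forall hψ0)).symm
      _ = ENNReal.ofReal W := by
          rw [hWdef]
          exact congrArg ENNReal.ofReal (integral_congr_ae hψae).symm
  -- replace w by its measurable representative in the double integral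
  have hLHS : (∫ x, ∫ y, dotProduct (star (w x)) ((K (x - y)) *ᵥ (w y)))
      = ∫ x, ∫ y, dotProduct (star (w' x)) ((K (x - y)) *ᵥ (w' y)) := by
    apply integral_congr_ae
    filter_upwards [hae] with x hx
    apply integral_congr_ae
    filter_upwards [hae] with y hy
    rw [hx, hy]
  rw [hLHS]
  -- pointwise Cauchy-Schwarz bound
  have hpt : ∀ x y : EuclideanSpace ℝ (Fin d),
      ‖dotProduct (star (w' x)) ((K (x - y)) *ᵥ (w' y))‖ₑ
        ≤ F x * G (x - y) * F y := by
    intro x y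
    rw [← ofReal_norm]
    calc ENNReal.ofReal ‖dotProduct (star (w' x)) ((K (x - y)) *ᵥ (w' y))‖
        ≤ ENNReal.ofReal (matNorm (K (x - y)) * Real.sqrt (φ' x) * Real.sqrt (φ' y)) :=
          ENNReal.ofReal_le_ofReal (cs_dotProduct _ _ _)
      _ = F x * G (x - y) * F y := by
          rw [ENNReal.ofReal_mul (mul_nonneg (matNorm_nonneg _) (Real.sqrt_nonneg _)),
            ENNReal.ofReal_mul (matNorm_nonneg _)]
          show ENNReal.ofReal (matNorm (K (x - y))) * ENNReal.ofReal (Real.sqrt (φ' x))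
              * ENNReal.ofReal (Real.sqrt (φ' y)) = F x * G (x - y) * F y
          rw [hFdef, hGdef]
          ring
  set I : ℝ≥0∞ := ∫⁻ x, ∫⁻ y, F x * G (x - y) * F y with hIdef
  have hstep1 : ‖∫ x, ∫ y, dotProduct (star (w' x)) ((K (x - y)) *ᵥ (w' y))‖ₑ
      ≤ I := by
    calc ‖∫ x, ∫ y, dotProduct (star (w' x)) ((K (x - y)) *ᵥ (w' y))‖ₑ
        ≤ ∫⁻ x, ‖∫ y, dotProduct (star (w' x)) ((K (x - y)) *ᵥ (w' y))‖ₑ :=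
          enorm_integral_le_lintegral_enorm _
      _ ≤ ∫⁻ x, ∫⁻ y, ‖dotProduct (star (w' x)) ((K (x - y)) *ᵥ (w' y))‖ₑ :=
          lintegral_mono fun x => enorm_integral_le_lintegral_enorm _
      _ ≤ I := lintegral_mono fun x => lintegral_mono fun y => hpt x y
  -- product-space formulation
  have hFGprodmeas : Measurable
      fun p : EuclideanSpace ℝ (Fin d) × EuclideanSpace ℝ (Fin d) =>
        F p.1 * G (p.1 - p.2) * F p.2 :=
    ((hFmeas.comp measurable_fst).mul
      (hGmeas.comp (measurable_fst.sub measurable_snd))).mul (hFmeas.comp measurable_snd)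
  have hiter : I = ∫⁻ p : EuclideanSpace ℝ (Fin d) × EuclideanSpace ℝ (Fin d),
      F p.1 * G (p.1 - p.2) * F p.2 ∂(volume.prod volume) :=
    (lintegral_prod _ hFGprodmeas.aemeasurable).symm
  set B : Set (EuclideanSpace ℝ (Fin d) × EuclideanSpace ℝ (Fin d)) :=
    {p | ‖p.1 - p.2‖ ≤ R} with hBdef
  have hBmeas : MeasurableSet B :=
    measurableSet_le (continuous_fst.sub continuous_snd).norm.measurable measurable_const
  set f1 : EuclideanSpace ℝ (Fin d) × EuclideanSpace ℝ (Fin d) → ℝ≥0∞ :=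
    fun p => F p.1 ^ q * G (p.1 - p.2) ^ r with hf1
  set f2 : EuclideanSpace ℝ (Fin d) × EuclideanSpace ℝ (Fin d) → ℝ≥0∞ :=
    fun p => F p.2 ^ q * G (p.1 - p.2) ^ r with hf2
  set f3 : EuclideanSpace ℝ (Fin d) × EuclideanSpace ℝ (Fin d) → ℝ≥0∞ :=
    fun p => F p.1 ^ q * F p.2 ^ q * B.indicator 1 p with hf3
  have hf1meas : Measurable f1 :=
    ((hFmeas.comp measurable_fst).pow_const q).mul
      ((hGmeas.comp (measurable_fst.sub measurable_snd)).pow_const r)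
  have hf2meas : Measurable f2 :=
    ((hFmeas.comp measurable_snd).pow_const q).mul
      ((hGmeas.comp (measurable_fst.sub measurable_snd)).pow_const r)
  have hf3meas : Measurable f3 :=
    (((hFmeas.comp measurable_fst).pow_const q).mul
      ((hFmeas.comp measurable_snd).pow_const q)).mul (measurable_one.indicator hBmeas)
  have hsplit : ∀ p : EuclideanSpace ℝ (Fin d) × EuclideanSpace ℝ (Fin d),
      F p.1 * G (p.1 - p.2) * F p.2 = f1 p ^ α * f2 p ^ α * f3 p ^ γ := by
    intro p
    by_cases hp : p ∈ B
    · have hB1 : B.indicator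
          (1 : EuclideanSpace ℝ (Fin d) × EuclideanSpace ℝ (Fin d) → ℝ≥0∞) p = 1 := by
        rw [Set.indicator_of_mem hp]; rfl
      show F p.1 * G (p.1 - p.2) * F p.2
          = (F p.1 ^ q * G (p.1 - p.2) ^ r) ^ α * (F p.2 ^ q * G (p.1 - p.2) ^ r) ^ α
            * (F p.1 ^ q * F p.2 ^ q * B.indicator 1 p) ^ γ
      rw [hB1, mul_one]
      exact ennreal_split hq1 hq2 hr _ _ _
    · have hRlt : R < ‖p.1 - p.2‖ := by
        simp only [hBdef, Set.mem_setOf_eq] at hp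
        exact not_le.mp hp
      have hG0 : G (p.1 - p.2) = 0 := by
        show ENNReal.ofReal (matNorm (K (p.1 - p.2))) = 0
        rw [hKsupp _ hRlt, matNorm_zero, ENNReal.ofReal_zero]
      have hf10 : f1 p = 0 := by
        show F p.1 ^ q * G (p.1 - p.2) ^ r = 0
        rw [hG0, ENNReal.zero_rpow_of_pos hrpos, mul_zero]
      rw [hG0, mul_zero, zero_mul, hf10, ENNReal.zero_rpow_of_pos hαpos, zero_mul, zero_mul]
  have hHolder : (∫⁻ p, f1 p ^ α * f2 p ^ α * f3 p ^ γ ∂(volume.prod volume))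
      ≤ (∫⁻ p, f1 p ∂(volume.prod volume)) ^ α * (∫⁻ p, f2 p ∂(volume.prod volume)) ^ α
        * (∫⁻ p, f3 p ∂(volume.prod volume)) ^ γ := by
    have h := ENNReal.lintegral_prod_norm_pow_le
      (μ := (volume : Measure (EuclideanSpace ℝ (Fin d))).prod volume)
      (Finset.univ : Finset (Fin 3)) (f := ![f1, f2, f3]) (p := ![α, α, γ])
      (fun i _ => by
        fin_cases i
        · exact hf1meas.aemeasurable
        · exact hf2meas.aemeasurable
        · exact hf3meas.aemeasurable)
      (by
        simp only [Fin.sum_univ_three, Matrix.cons_val_zero, Matrix.cons_val_one,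
          Matrix.head_cons, Matrix.cons_val_two, Matrix.tail_cons]
        exact hsum3)
      (fun i _ => by
        fin_cases i
        · exact hαpos.le
        · exact hαpos.le
        · exact hγ0)
    simpa only [Fin.prod_univ_three, Matrix.cons_val_zero, Matrix.cons_val_one,
      Matrix.head_cons, Matrix.cons_val_two, Matrix.tail_cons] using h
  have hGr_meas : Measurable fun v : EuclideanSpace ℝ (Fin d) => G v ^ r := hGmeas.pow_const r
  have hJ1 : (∫⁻ p, f1 p ∂(volume.prod volume)) = ENNReal.ofReal W * 𝒦 := by
    rw [lintegral_prod _ hf1meas.aemeasurable]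
    have h1 : ∀ x : EuclideanSpace ℝ (Fin d), ∫⁻ y, f1 (x, y) = F x ^ q * 𝒦 := by
      intro x
      show ∫⁻ y, F x ^ q * G (x - y) ^ r = F x ^ q * 𝒦
      have hg1 : Measurable fun y : EuclideanSpace ℝ (Fin d) => G (x - y) ^ r :=
        hGr_meas.comp (measurable_const.sub measurable_id)
      rw [lintegral_const_mul _ hg1]
      congr 1
      exact (Measure.measurePreserving_sub_left volume x).lintegral_comp hGr_meas
    simp_rw [h1]
    rw [lintegral_mul_const _ (hFmeas.pow_const q), hWlint]
  have hJ2 : (∫⁻ p, f2 p ∂(volume.prod volume)) = ENNReal.ofReal W * 𝒦 := by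
    rw [lintegral_prod_symm _ hf2meas.aemeasurable]
    have h1 : ∀ y : EuclideanSpace ℝ (Fin d), ∫⁻ x, f2 (x, y) = F y ^ q * 𝒦 := by
      intro y
      show ∫⁻ x, F y ^ q * G (x - y) ^ r = F y ^ q * 𝒦
      have hg1 : Measurable fun x : EuclideanSpace ℝ (Fin d) => G (x - y) ^ r :=
        hGr_meas.comp (measurable_id.sub measurable_const)
      rw [lintegral_const_mul _ hg1]
      congr 1
      exact (measurePreserving_sub_right volume y).lintegral_comp hGr_meas
    simp_rw [h1]
    rw [lintegral_mul_const _ (hFmeas.pow_const q), hWlint]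
  have hJ3 : (∫⁻ p, f3 p ∂(volume.prod volume))
      ≤ ENNReal.ofReal W * ((Mc : ℝ≥0∞) * ENNReal.ofReal (S ^ q)) := by
    rw [lintegral_prod _ hf3meas.aemeasurable]
    have h1 : ∀ x : EuclideanSpace ℝ (Fin d),
        (∫⁻ y, f3 (x, y)) = F x ^ q * ∫⁻ y in Metric.closedBall x R, F y ^ q := by
      intro x
      have h2 : ∀ y : EuclideanSpace ℝ (Fin d), f3 (x, y)
          = F x ^ q * (Metric.closedBall x R).indicator (fun y => F y ^ q) y := by
        intro y
        show F x ^ q * F y ^ q * B.indicator 1 (x, y) = _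
        by_cases hy : y ∈ Metric.closedBall x R
        · have hxy : (x, y) ∈ B := by
            simp only [hBdef, Set.mem_setOf_eq]
            rw [← dist_eq_norm, dist_comm]
            exact Metric.mem_closedBall.mp hy
          rw [Set.indicator_of_mem hxy, Set.indicator_of_mem hy, Pi.one_apply, mul_one]
        · have hxy : (x, y) ∉ B := by
            simp only [hBdef, Set.mem_setOf_eq]
            rw [← dist_eq_norm, dist_comm]
            exact fun h => hy (Metric.mem_closedBall.mpr h)
          rw [Set.indicator_of_notMem hxy, Set.indicator_of_notMem hy, mul_zero, mul_zero]
      calc (∫⁻ y, f3 (x, y))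
          = ∫⁻ y, F x ^ q * (Metric.closedBall x R).indicator (fun y => F y ^ q) y :=
            lintegral_congr h2
        _ = F x ^ q * ∫⁻ y, (Metric.closedBall x R).indicator (fun y => F y ^ q) y :=
            lintegral_const_mul _ ((hFmeas.pow_const q).indicator measurableSet_closedBall)
        _ = F x ^ q * ∫⁻ y in Metric.closedBall x R, F y ^ q := by
            rw [lintegral_indicator measurableSet_closedBall]
    simp_rw [h1]
    calc ∫⁻ x, F x ^ q * ∫⁻ y in Metric.closedBall x R, F y ^ q
        ≤ ∫⁻ x, F x ^ q * ((Mc : ℝ≥0∞) * ENNReal.ofReal (S ^ q)) :=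
          lintegral_mono fun x => mul_le_mul_right (hball x) _
      _ = (∫⁻ x, F x ^ q) * ((Mc : ℝ≥0∞) * ENNReal.ofReal (S ^ q)) :=
          lintegral_mul_const _ (hFmeas.pow_const q)
      _ = ENNReal.ofReal W * ((Mc : ℝ≥0∞) * ENNReal.ofReal (S ^ q)) := by rw [hWlint]
  -- assemble
  have hfinal : I ≤ ENNReal.ofReal ((D.toReal + 1) * S ^ (2 - q) * W) := by
    rw [hiter]
    calc ∫⁻ p, F p.1 * G (p.1 - p.2) * F p.2 ∂(volume.prod volume)
        = ∫⁻ p, f1 p ^ α * f2 p ^ α * f3 p ^ γ ∂(volume.prod volume) := lintegral_congr hsplit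
      _ ≤ (∫⁻ p, f1 p ∂(volume.prod volume)) ^ α * (∫⁻ p, f2 p ∂(volume.prod volume)) ^ α
          * (∫⁻ p, f3 p ∂(volume.prod volume)) ^ γ := hHolder
      _ ≤ (ENNReal.ofReal W * 𝒦) ^ α * (ENNReal.ofReal W * 𝒦) ^ α
          * (ENNReal.ofReal W * ((Mc : ℝ≥0∞) * ENNReal.ofReal (S ^ q))) ^ γ := by
          rw [hJ1, hJ2]
          gcongr
      _ = ENNReal.ofReal W * (𝒦 ^ α * 𝒦 ^ α)
          * ((Mc : ℝ≥0∞) * ENNReal.ofReal (S ^ q)) ^ γ :=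
          ennreal_assemble hαpos.le hγ0 hsum3 _ _ _
      _ = ENNReal.ofReal W * 𝒦 ^ (2 * α)
          * ((Mc : ℝ≥0∞) ^ γ * ENNReal.ofReal (S ^ (2 - q))) := by
          rw [← ENNReal.rpow_add_of_nonneg _ _ hαpos.le hαpos.le,
            ENNReal.mul_rpow_of_nonneg _ _ hγ0,
            ENNReal.ofReal_rpow_of_nonneg (Real.rpow_nonneg hS0 q) hγ0,
            ← Real.rpow_mul hS0]
          congr 3
          · ring
          · rw [hγdef]
            field_simp
      _ = ENNReal.ofReal W * D * ENNReal.ofReal (S ^ (2 - q)) := by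
          rw [hDdef]; ring
      _ ≤ ENNReal.ofReal W * ENNReal.ofReal (D.toReal + 1) * ENNReal.ofReal (S ^ (2 - q)) := by
          gcongr
          calc D = ENNReal.ofReal D.toReal := (ENNReal.ofReal_toReal hDne).symm
            _ ≤ ENNReal.ofReal (D.toReal + 1) := ENNReal.ofReal_le_ofReal (by linarith)
      _ = ENNReal.ofReal ((D.toReal + 1) * S ^ (2 - q) * W) := by
          rw [← ENNReal.ofReal_mul hW0, ← ENNReal.ofReal_mul (by positivity)]
          congr 1
          ring
  have hRHS0 : 0 ≤ (D.toReal + 1) * S ^ (2 - q) * W :=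
    mul_nonneg (mul_nonneg (by positivity) (Real.rpow_nonneg hS0 _)) hW0
  have hchain := le_trans hstep1 hfinal
  rw [← ofReal_norm] at hchain
  exact (ENNReal.ofReal_le_ofReal_iff hRHS0).mp hchain
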